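/- arXiv:2412.20502 — 6 statements merged into one kernel-verified Lean document; each statement's English description precedes it below -/
import Mathlib

section
/- Let A and S be 2×2 real symmetric matrices with tr(A S) = 0, and suppose λ I ≤ A ≤ Λ I in the Loewner order for constants 0 < λ ≤ Λ. Then −(2/Λ) det(A) det(S) ≤ tr(A S²) ≤ −(2/λ) det(A) det(S). (This is the matrix form of the estimate −(2/Λ_γ) K_γ ≤ ⟨A_γ S, S⟩ ≤ −(2/λ_γ) K_γ for a γ-anisotropic minimal surface, where K_γ = det(A_γ S) is the anisotropic Gaussian curvature.) -/
set_option maxHeartbeats 1000000 in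
private lemma quad_form_nonneg (M : Matrix (Fin 2) (Fin 2) ℝ) (h : M.PosSemidef) (x y : ℝ) :
    0 ≤ M 0 0 * x ^ 2 + (M 0 1 + M 1 0) * x * y + M 1 1 * y ^ 2 := by
  have := h.dotProduct_mulVec_nonneg ![x, y]
  simp [dotProduct, Matrix.mulVec, Fin.sum_univ_two] at this
  ring_nf at this ⊢
  linarith

set_option maxHeartbeats 1000000 in
/-- If `A` and `S` are 2×2 real symmetric matrices with `tr(A S) = 0` and
`λ I ≤ A ≤ Λ I` in the Loewner order for some `0 < λ ≤ Λ`, then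
`−(2/Λ) det(A) det(S) ≤ tr(A S²) ≤ −(2/λ) det(A) det(S)`. -/
theorem trace_mul_sq_bounds_of_loewner
    (A S : Matrix (Fin 2) (Fin 2) ℝ) (hA : A.IsSymm) (hS : S.IsSymm)
    (htr : (A * S).trace = 0)
    (lam Lam : ℝ) (hlam : 0 < lam) (hlamLam : lam ≤ Lam)
    (hlow : (A - lam • (1 : Matrix (Fin 2) (Fin 2) ℝ)).PosSemidef)
    (hupp : ((Lam • (1 : Matrix (Fin 2) (Fin 2) ℝ)) - A).PosSemidef) :
    -(2 / Lam) * (A.det * S.det) ≤ (A * (S * S)).trace ∧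
      (A * (S * S)).trace ≤ -(2 / lam) * (A.det * S.det) := by
  have hA10 : A 1 0 = A 0 1 := (hA.apply 1 0).symm
  have hS10 : S 1 0 = S 0 1 := (hS.apply 1 0).symm
  set a := A 0 0 with ha'
  set b := A 0 1 with hb'
  set c := A 1 1 with hc'
  set p := S 0 0 with hp'
  set q := S 0 1 with hq'
  set r := S 1 1 with hr'
  have hL : (0:ℝ) < Lam := lt_of_lt_of_le hlam hlamLam
  have h1 : ∀ x y : ℝ, 0 ≤ (a - lam) * x ^ 2 + 2 * b * x * y + (c - lam) * y ^ 2 := by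
    intro x y
    have := quad_form_nonneg _ hlow x y
    simp [Matrix.sub_apply, Matrix.smul_apply, Matrix.one_apply, hA10] at this
    linarith
  have h2 : ∀ x y : ℝ, 0 ≤ (Lam - a) * x ^ 2 - 2 * b * x * y + (Lam - c) * y ^ 2 := by
    intro x y
    have := quad_form_nonneg _ hupp x y
    simp [Matrix.sub_apply, Matrix.smul_apply, Matrix.one_apply, hA10] at this
    linarith
  have ha1 : lam ≤ a := by have := h1 1 0; nlinarith
  have hc1 : lam ≤ c := by have := h1 0 1; nlinarith
  have ha2 : a ≤ Lam := by have := h2 1 0; nlinarith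
  have hc2 : c ≤ Lam := by have := h2 0 1; nlinarith
  have hd1 : b ^ 2 ≤ (a - lam) * (c - lam) := by
    have hdisc : discrim (a - lam) (2 * b) (c - lam) ≤ 0 := by
      apply discrim_le_zero
      intro x
      have := h1 x 1
      nlinarith
    rw [discrim] at hdisc
    nlinarith
  have hbac : b ^ 2 ≤ a * c := by nlinarith
  have htr' : a * p + 2 * b * q + c * r = 0 := by
    have := htr
    simp [Matrix.trace, Matrix.mul_apply, Fin.sum_univ_two, hA10, hS10] at this
    linarith
  have hT : (A * (S * S)).trace = -(a + c) * (p * r - q ^ 2) := by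
    simp [Matrix.trace, Matrix.mul_apply, Fin.sum_univ_two, hA10, hS10]
    linear_combination (p + r) * htr'
  have hdetA : A.det = a * c - b ^ 2 := by
    rw [Matrix.det_fin_two, hA10]; ring
  have hdetS : S.det = p * r - q ^ 2 := by
    rw [Matrix.det_fin_two, hS10]; ring
  have esq : (a * p + c * r) ^ 2 = 4 * (b ^ 2) * (q ^ 2) := by
    linear_combination (a * p + c * r - 2 * b * q) * htr'
  have hdS : p * r - q ^ 2 ≤ 0 := by
    nlinarith [esq, sq_nonneg (a * p - c * r),
      mul_le_mul_of_nonneg_right hbac (sq_nonneg q),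
      mul_pos (lt_of_lt_of_le hlam ha1) (lt_of_lt_of_le hlam hc1), sq_nonneg q]
  have hnds : (0:ℝ) ≤ -(p * r - q ^ 2) := by linarith
  have ineq1 : 2 * (a * c - b ^ 2) ≤ Lam * (a + c) := by
    nlinarith [mul_nonneg (le_of_lt (lt_of_lt_of_le hlam ha1)) (sub_nonneg.2 hc2),
      mul_nonneg (le_of_lt (lt_of_lt_of_le hlam hc1)) (sub_nonneg.2 ha2), sq_nonneg b]
  have ineq2 : lam * (a + c) ≤ 2 * (a * c - b ^ 2) := by nlinarith
  clear_value a b c p q r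
  clear h1 h2 hlow hupp htr hA hS hA10 hS10 ha' hb' hc' hp' hq' hr' htr' esq
  constructor
  · rw [hT, hdetA, hdetS]
    have h2L : 2 / Lam * (a * c - b ^ 2) ≤ a + c := by
      rw [div_mul_eq_mul_div, div_le_iff₀ hL]; nlinarith
    nlinarith [mul_le_mul_of_nonneg_right h2L hnds]
  · rw [hT, hdetA, hdetS]
    have h2l : a + c ≤ 2 / lam * (a * c - b ^ 2) := by
      rw [div_mul_eq_mul_div, le_div_iff₀ hlam]; nlinarith
    nlinarith [mul_le_mul_of_nonneg_right h2l hnds]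
end

section
/- Let B and H be 2×2 real symmetric matrices with tr(B H) = 0, and suppose λ I ≤ B ≤ Λ I in the Loewner order for constants 0 < λ ≤ Λ. Then −2 det H ≤ tr(H²) ≤ (λ/Λ + Λ/λ)(−det H). (Geometrically, with B = A_γ and H the shape operator of a γ-anisotropic minimal surface, this is the identity |A|² = (a₁/a₂ + a₂/a₁)(−K^Σ) together with the bounds a₁/a₂ ∈ [λ/Λ, Λ/λ].) -/
set_option maxHeartbeats 1000000 in
private lemma aniso_key (l L a b c p q r : ℝ) (hl : 0 < l) (hlL : l ≤ L)
    (h1 : l ≤ a) (h3 : a ≤ L) (h2 : l ≤ c) (h4 : c ≤ L)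
    (h5 : b^2 ≤ (a-l)*(c-l)) (h6 : b^2 ≤ (L-a)*(L-c))
    (hz : a*p + 2*b*q + c*r = 0) :
    (l*p + L*r)*(L*p + l*r) ≤ (L-l)^2 * q^2 := by
  have hL : 0 < L := lt_of_lt_of_le hl hlL
  have hsu : b^2 ≤ (a-l)*(L-a) := by
    rcases eq_or_lt_of_le hlL with h | h
    · have ha : a = l := le_antisymm (h ▸ h3) h1
      have hc : c = l := le_antisymm (h ▸ h4) h2
      subst ha; nlinarith [h5, hc]
    · nlinarith [mul_le_mul_of_nonneg_left h5 (by linarith : (0:ℝ) ≤ L - a),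
        mul_le_mul_of_nonneg_left h6 (by linarith : (0:ℝ) ≤ a - l), h]
  have htv : b^2 ≤ (c-l)*(L-c) := by
    rcases eq_or_lt_of_le hlL with h | h
    · have ha : a = l := le_antisymm (h ▸ h3) h1
      have hc : c = l := le_antisymm (h ▸ h4) h2
      subst hc; nlinarith [h5, ha]
    · nlinarith [mul_le_mul_of_nonneg_left h5 (by linarith : (0:ℝ) ≤ L - c),
        mul_le_mul_of_nonneg_left h6 (by linarith : (0:ℝ) ≤ c - l), h]
  have hpp : 4*l*L*b^2 ≤ a^2*(L-l)^2 := by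
    nlinarith [hsu, sq_nonneg (a*(L+l) - 2*l*L), mul_pos hl hL]
  have hrr : 4*l*L*b^2 ≤ c^2*(L-l)^2 := by
    nlinarith [htv, sq_nonneg (c*(L+l) - 2*l*L), mul_pos hl hL]
  have hC2 : b^2*(L+l)^2 ≤ (L*a - l*c)*(L*c - l*a) := by
    nlinarith [mul_le_mul_of_nonneg_left h5 (by positivity : (0:ℝ) ≤ L^2),
      mul_le_mul_of_nonneg_left h6 (by positivity : (0:ℝ) ≤ l^2),
      mul_le_mul_of_nonneg_left hsu (by positivity : (0:ℝ) ≤ l*L),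
      mul_le_mul_of_nonneg_left htv (by positivity : (0:ℝ) ≤ l*L)]
  have ha0 : (0:ℝ) < a := lt_of_lt_of_le hl h1
  have hc0 : (0:ℝ) < c := lt_of_lt_of_le hl h2
  have hP : 0 ≤ L*a - l*c := by nlinarith
  have hQ : 0 ≤ L*c - l*a := by nlinarith
  rcases eq_or_ne b 0 with hb | hb
  · subst hb
    have hzz : a*p + c*r = 0 := by linarith [hz]
    have hpr : a*c*(p*r) = -(c*r)^2 := by linear_combination (c*r) * hzz
    have hXYid : a*c*((l*p + L*r)*(L*p + l*r)) = (L*a - l*c)*(L*c - l*a)*(p*r) := by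
      linear_combination (l*L*(c*p + a*r)) * hzz
    have hpr0 : p*r ≤ 0 := by nlinarith [hpr, sq_nonneg (c*r), mul_pos ha0 hc0]
    have hXY0 : (l*p + L*r)*(L*p + l*r) ≤ 0 := by
      have h7 : (L*a - l*c)*(L*c - l*a)*(p*r) ≤ 0 :=
        mul_nonpos_of_nonneg_of_nonpos (mul_nonneg hP hQ) hpr0
      nlinarith [hXYid, h7, mul_pos ha0 hc0]
    nlinarith [hXY0, sq_nonneg q, sq_nonneg (L-l)]
  · have hb2 : 0 < b^2 := by positivity
    obtain ⟨cpp, hcpp⟩ : ∃ x:ℝ, x = a^2*(L-l)^2 - 4*l*L*b^2 := ⟨_, rfl⟩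
    obtain ⟨crr, hcrr⟩ : ∃ x:ℝ, x = c^2*(L-l)^2 - 4*l*L*b^2 := ⟨_, rfl⟩
    obtain ⟨cpr, hcpr⟩ : ∃ x:ℝ, x = 2*a*c*(L-l)^2 - 4*b^2*(L^2+l^2) := ⟨_, rfl⟩
    have hcpp0 : 0 ≤ cpp := by rw [hcpp]; linarith [hpp]
    have hcrr0 : 0 ≤ crr := by rw [hcrr]; linarith [hrr]
    have hdisc : cpr^2 ≤ 4*cpp*crr := by
      have key : 4*cpp*crr - cpr^2
          = 16*b^2*((L-l)^2*((L*a-l*c)*(L*c-l*a)) - b^2*(L+l)^2*(L-l)^2) := by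
        rw [hcpp, hcrr, hcpr]; ring
      have h1' : b^2*(L+l)^2*(L-l)^2 ≤ (L-l)^2*((L*a-l*c)*(L*c-l*a)) := by
        calc b^2*(L+l)^2*(L-l)^2 = (L-l)^2 * (b^2*(L+l)^2) := by ring
          _ ≤ (L-l)^2 * ((L*a - l*c)*(L*c - l*a)) :=
            mul_le_mul_of_nonneg_left hC2 (sq_nonneg _)
      have h8 : 0 ≤ 16*b^2*((L-l)^2*((L*a-l*c)*(L*c-l*a)) - b^2*(L+l)^2*(L-l)^2) := by
        apply mul_nonneg (by positivity)
        linarith [h1']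
      linarith [key, h8]
    have hF : 0 ≤ cpp*p^2 + cpr*(p*r) + crr*r^2 := by
      rcases eq_or_lt_of_le hcpp0 with hcz | hcz
      · have hcpr0 : cpr = 0 := by
          have h9 : cpr^2 ≤ 0 := by rw [← hcz] at hdisc; linarith [hdisc]
          nlinarith [sq_nonneg cpr, h9]
        rw [hcpr0, ← hcz]
        nlinarith [mul_nonneg hcrr0 (sq_nonneg r)]
      · nlinarith [sq_nonneg (2*cpp*p + cpr*r), hcz,
          mul_nonneg (sub_nonneg.mpr hdisc) (sq_nonneg r)]
    have hq2 : (a*p + c*r)^2 = 4*b^2*q^2 := by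
      linear_combination (a*p + c*r - 2*b*q) * hz
    have hid : 4*b^2*((L-l)^2*q^2 - (l*p + L*r)*(L*p + l*r))
        = cpp*p^2 + cpr*(p*r) + crr*r^2 := by
      rw [hcpp, hcrr, hcpr]
      linear_combination (-(L-l)^2) * hq2
    by_contra hcon
    push_neg at hcon
    have hneg := mul_pos hb2 (sub_pos.mpr hcon)
    nlinarith [hF, hid, hneg]


set_option maxHeartbeats 1000000 in
/-- If `B` and `H` are 2×2 real symmetric matrices with `tr(B H) = 0` and
`λ I ≤ B ≤ Λ I` in the Loewner order for some `0 < λ ≤ Λ`, then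
`−2 det H ≤ tr(H²) ≤ (λ/Λ + Λ/λ)(−det H)`. -/
theorem normSq_bounds_of_anisotropic_minimal
    (B H : Matrix (Fin 2) (Fin 2) ℝ) (hB : B.IsSymm) (hH : H.IsSymm)
    (htr : (B * H).trace = 0)
    (lam Lam : ℝ) (hlam : 0 < lam) (hlamLam : lam ≤ Lam)
    (hlow : (B - lam • (1 : Matrix (Fin 2) (Fin 2) ℝ)).PosSemidef)
    (hupp : ((Lam • (1 : Matrix (Fin 2) (Fin 2) ℝ)) - B).PosSemidef) :
    -2 * H.det ≤ (H * H).trace ∧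
      (H * H).trace ≤ (lam / Lam + Lam / lam) * (-H.det) := by
  have psd_entries : ∀ M : Matrix (Fin 2) (Fin 2) ℝ, M.PosSemidef →
      0 ≤ M 0 0 ∧ 0 ≤ M 1 1 ∧ (M 0 1)^2 ≤ M 0 0 * M 1 1 := by
    intro M h
    have hsym : M 1 0 = M 0 1 := by
      have := h.1
      rw [Matrix.IsHermitian] at this
      conv_lhs => rw [← this]
      simp [Matrix.conjTranspose_apply]
    have h00 : 0 ≤ M 0 0 := by
      have := h.dotProduct_mulVec_nonneg ![1,0]
      simpa [Matrix.mulVec, dotProduct, Fin.sum_univ_two] using this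
    have h11 : 0 ≤ M 1 1 := by
      have := h.dotProduct_mulVec_nonneg ![0,1]
      simpa [Matrix.mulVec, dotProduct, Fin.sum_univ_two] using this
    refine ⟨h00, h11, ?_⟩
    have hq : ∀ y : ℝ, 0 ≤ M 1 1 * (y * y) + (2 * M 0 1) * y + M 0 0 := by
      intro y
      have := h.dotProduct_mulVec_nonneg ![1, y]
      simp [Matrix.mulVec, dotProduct, Fin.sum_univ_two, hsym] at this
      nlinarith [this]
    have := discrim_le_zero (a := M 1 1) (b := 2 * M 0 1) (c := M 0 0) hq
    rw [discrim] at this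
    nlinarith [this]
  set a := B 0 0 with ha
  set b := B 0 1 with hbdef
  set c := B 1 1 with hc
  set p := H 0 0 with hp
  set q := H 0 1 with hq
  set r := H 1 1 with hr
  have hb' : B 1 0 = b := hB.apply 0 1
  have hq' : H 1 0 = q := hH.apply 0 1
  obtain ⟨e1, e2, e3⟩ := psd_entries _ hlow
  obtain ⟨f1, f2, f3⟩ := psd_entries _ hupp
  simp [Matrix.sub_apply, Matrix.smul_apply, Matrix.one_apply] at e1 e2 e3 f1 f2 f3
  have h1 : lam ≤ a := by linarith
  have h2 : lam ≤ c := by linarith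
  have h3 : a ≤ Lam := by linarith
  have h4 : c ≤ Lam := by linarith
  have h5 : b^2 ≤ (a-lam)*(c-lam) := by linarith [e3]
  have h6 : b^2 ≤ (Lam-a)*(Lam-c) := by linarith [f3]
  have hz : a*p + 2*b*q + c*r = 0 := by
    have := htr
    rw [Matrix.trace_fin_two] at this
    simp [Matrix.mul_apply, Fin.sum_univ_two, hb', hq'] at this
    linarith [this]
  have htrHH : (H * H).trace = p^2 + 2*q^2 + r^2 := by
    rw [Matrix.trace_fin_two]
    simp [Matrix.mul_apply, Fin.sum_univ_two, hq']
    ring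
  have hdetH : H.det = p*r - q^2 := by
    rw [Matrix.det_fin_two]
    rw [hq']
    ring
  constructor
  · rw [htrHH, hdetH]; nlinarith [sq_nonneg (p + r)]
  · have key : (lam*p + Lam*r)*(Lam*p + lam*r) ≤ (Lam-lam)^2 * q^2 :=
      aniso_key lam Lam a b c p q r hlam hlamLam h1 h3 h2 h4 h5 h6 hz
    have hL : 0 < Lam := lt_of_lt_of_le hlam hlamLam
    rw [htrHH, hdetH]
    have hdiv : lam / Lam + Lam / lam = (lam^2 + Lam^2)/(lam*Lam) := by
      field_simp
    rw [hdiv, div_mul_eq_mul_div, le_div_iff₀ (by positivity)]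
    nlinarith [key]
end

section
/- Let A and S be 2×2 real symmetric matrices with tr(A S) = 0, and suppose λ I ≤ A ≤ Λ I in the Loewner order for constants 0 < λ ≤ Λ. Then tr(S A² S) ≤ c · (− det(A) det(S)), where c = (Λ/λ)² (Λ/λ + λ/Λ). (Geometrically: the trace of the pullback metric S A_γ² S via the anisotropic Gauss map is bounded by −c(γ) K_γ, where K_γ = det(A_γ S) is the anisotropic Gaussian curvature.) -/
set_option maxHeartbeats 1000000

private lemma slope_aux (lam Lam u X : ℝ) (hlam : 0 < lam) (hXnn : 0 ≤ X)
    (F1 : X ≤ (u-lam)^2) (F2 : X ≤ (Lam-u)^2) (hul : lam ≤ u) (huL : u ≤ Lam) :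
    4*lam*Lam*X ≤ (Lam-lam)^2*(u^2-X) := by
  have hLam : 0 < Lam := by linarith
  have ht : 0 ≤ (u-lam)*(Lam-u) := mul_nonneg (by linarith) (by linarith)
  have F3 : X ≤ (u-lam)*(Lam-u) := by
    nlinarith [mul_le_mul F1 F2 hXnn (sq_nonneg (u-lam))]
  have e1 := mul_le_mul_of_nonneg_left F2 (sq_nonneg lam)
  have e2 := mul_le_mul_of_nonneg_left F1 (sq_nonneg Lam)
  have e3 := mul_le_mul_of_nonneg_left F3 (by positivity : (0:ℝ) ≤ 2*lam*Lam)
  nlinarith [e1, e2, e3]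

private lemma vley_aux (U X Y V : ℝ) (h5 : U*V ≤ X*Y) (hXU : X < U) (hX : 0 ≤ X)
    (hV : 0 ≤ V) (hY : 0 ≤ Y) : V ≤ Y := by nlinarith

private lemma delta_aux (lam Lam U X Y V : ℝ)
    (hP1 : 0 ≤ (Lam-lam)^2*(U-X) - 4*lam*Lam*X) (hYV : V ≤ Y) (hV : 0 ≤ V)
    (hUX : X ≤ U) (hlam : 0 < lam) (hLam : 0 < Lam) :
    4*lam*Lam*(X*Y-U*V) ≤ (Lam-lam)^2*(U-X)*(Y-V) := by
  have ha := mul_nonneg hP1 (by linarith : (0:ℝ) ≤ Y-V)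
  have hb : 0 ≤ 4*lam*Lam*(V*(U-X)) :=
    mul_nonneg (by positivity) (mul_nonneg hV (by linarith))
  nlinarith [ha, hb]

private lemma key_scalar (a b d p q r lam Lam : ℝ) (hlam : 0 < lam) (hlamLam : lam ≤ Lam)
    (h1 : lam ≤ a) (h2 : lam ≤ d) (h3 : b^2 ≤ (a-lam)*(d-lam))
    (h4 : a ≤ Lam) (h5 : d ≤ Lam) (h6 : b^2 ≤ (Lam-a)*(Lam-d))
    (htr : a*p + 2*b*q + d*r = 0) :
    (2*((a*d-b^2)*(q^2-p*r)) + ((a-d)*q+b*(r-p))^2) * (lam^3*Lam)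
      ≤ (Lam^4 + Lam^2*lam^2) * ((a*d-b^2)*(q^2-p*r)) := by
  have hLam : 0 < Lam := lt_of_lt_of_le hlam hlamLam
  obtain ⟨u, hu⟩ : ∃ u : ℝ, u = (a+d)/2 := ⟨_, rfl⟩
  obtain ⟨v, hv⟩ : ∃ v : ℝ, v = (p+r)/2 := ⟨_, rfl⟩
  obtain ⟨e, he⟩ : ∃ e : ℝ, e = (a-d)/2 := ⟨_, rfl⟩
  obtain ⟨f, hf⟩ : ∃ f : ℝ, f = (p-r)/2 := ⟨_, rfl⟩
  obtain ⟨X, hX⟩ : ∃ X : ℝ, X = e^2+b^2 := ⟨_, rfl⟩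
  obtain ⟨Y, hY⟩ : ∃ Y : ℝ, Y = f^2+q^2 := ⟨_, rfl⟩
  have hXnn : 0 ≤ X := by rw [hX]; positivity
  have hYnn : 0 ≤ Y := by rw [hY]; positivity
  have hVnn : 0 ≤ v^2 := sq_nonneg v
  have hul : lam ≤ u := by rw [hu]; linarith
  have huL : u ≤ Lam := by rw [hu]; linarith
  have F1 : X ≤ (u-lam)^2 := by
    have h' : (u-lam)^2 - e^2 = (a-lam)*(d-lam) := by rw [hu, he]; ring
    nlinarith [h3, h']
  have F2 : X ≤ (Lam-u)^2 := by
    have h' : (Lam-u)^2 - e^2 = (Lam-a)*(Lam-d) := by rw [hu, he]; ring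
    nlinarith [h6, h']
  have F4 := slope_aux lam Lam u X hlam hXnn F1 F2 hul huL
  -- constraint in rotated variables
  have hc : e*f + b*q = -(u*v) := by rw [he, hf, hu, hv]; nlinarith [htr]
  have hc2 : u^2 * v^2 = (e*f+b*q)^2 := by rw [hc]; ring
  -- Cauchy-Schwarz
  have F5 : u^2 * v^2 ≤ X * Y := by
    rw [hX, hY, hc2]; nlinarith [sq_nonneg (e*q - b*f)]
  have hDeq : u^2 - X = a*d - b^2 := by rw [hX, hu, he]; ring
  have hD : X < u^2 := by nlinarith [h3, h1, h2, hlam, hDeq]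
  have F6 : v^2 ≤ Y := vley_aux (u^2) X Y (v^2) F5 hD hXnn hVnn hYnn
  have F7 := delta_aux lam Lam (u^2) X Y (v^2) (by linarith [F4]) F6 hVnn hD.le hlam hLam
  -- identities back to entries
  have hw : ((a-d)*q+b*(r-p))^2 = 4*(X*Y - u^2*v^2) := by
    rw [hX, hY, hc2, he, hf]; ring
  have hE : q^2 - p*r = Y - v^2 := by rw [hY, hv, hf]; ring
  have hDEnn : 0 ≤ (u^2-X)*(Y-v^2) := mul_nonneg (by linarith) (by linarith)
  have hL4 : 0 ≤ (Lam^4 - lam^4) * ((u^2-X)*(Y-v^2)) := by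
    apply mul_nonneg _ hDEnn
    nlinarith [pow_le_pow_left₀ hlam.le hlamLam 4]
  have t1 := mul_le_mul_of_nonneg_left F7 (sq_nonneg lam)
  rw [show a*d - b^2 = u^2 - X from hDeq.symm, hE, hw]
  nlinarith [t1, hL4]

lemma quad_disc (α β γ : ℝ) (h : ∀ x y : ℝ, 0 ≤ α*x^2 + 2*β*(x*y) + γ*y^2) : β^2 ≤ α*γ := by
  nlinarith [h β (-α), h γ (-β), h 1 0, h 0 1, h (2*β) (-(α+1)), h (-(γ+1)) (2*β)]

lemma psd_quad (M : Matrix (Fin 2) (Fin 2) ℝ) (h : M.PosSemidef) (x y : ℝ) :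
    0 ≤ M 0 0 * x^2 + (M 0 1 + M 1 0) * (x*y) + M 1 1 * y^2 := by
  have h2 := h.dotProduct_mulVec_nonneg ![x, y]
  simp [dotProduct, Matrix.mulVec, Fin.sum_univ_two] at h2
  nlinarith [h2]


/-- If `A` and `S` are 2×2 real symmetric matrices with `tr(A S) = 0` and
`λ I ≤ A ≤ Λ I` in the Loewner order for some `0 < λ ≤ Λ`, then
`tr(S A² S) ≤ c (−det(A) det(S))` with `c = (Λ/λ)² (Λ/λ + λ/Λ)`. -/
theorem trace_pullback_metric_bound
    (A S : Matrix (Fin 2) (Fin 2) ℝ) (hA : A.IsSymm) (hS : S.IsSymm)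
    (htr : (A * S).trace = 0)
    (lam Lam : ℝ) (hlam : 0 < lam) (hlamLam : lam ≤ Lam)
    (hlow : (A - lam • (1 : Matrix (Fin 2) (Fin 2) ℝ)).PosSemidef)
    (hupp : ((Lam • (1 : Matrix (Fin 2) (Fin 2) ℝ)) - A).PosSemidef) :
    (S * (A * A) * S).trace
      ≤ (Lam / lam) ^ 2 * (Lam / lam + lam / Lam) * (-(A.det * S.det)) := by
  have hLam : 0 < Lam := lt_of_lt_of_le hlam hlamLam
  have hb : A 1 0 = A 0 1 := hA.apply 0 1
  have hq : S 1 0 = S 0 1 := hS.apply 0 1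
  have Qlow : ∀ x y : ℝ, 0 ≤ (A 0 0 - lam)*x^2 + 2*(A 0 1)*(x*y) + (A 1 1 - lam)*y^2 := by
    intro x y
    have := psd_quad _ hlow x y
    simp [Matrix.sub_apply, Matrix.smul_apply, Matrix.one_apply, hb] at this
    nlinarith [this]
  have Qupp : ∀ x y : ℝ, 0 ≤ (Lam - A 0 0)*x^2 + 2*(-(A 0 1))*(x*y) + (Lam - A 1 1)*y^2 := by
    intro x y
    have := psd_quad _ hupp x y
    simp [Matrix.sub_apply, Matrix.smul_apply, Matrix.one_apply, hb] at this
    nlinarith [this]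
  have h1 : lam ≤ A 0 0 := by nlinarith [Qlow 1 0]
  have h2 : lam ≤ A 1 1 := by nlinarith [Qlow 0 1]
  have h4 : A 0 0 ≤ Lam := by nlinarith [Qupp 1 0]
  have h5 : A 1 1 ≤ Lam := by nlinarith [Qupp 0 1]
  have h3 : (A 0 1)^2 ≤ (A 0 0 - lam)*(A 1 1 - lam) := quad_disc _ _ _ Qlow
  have h6' : (-(A 0 1))^2 ≤ (Lam - A 0 0)*(Lam - A 1 1) := quad_disc _ _ _ Qupp
  have h6 : (A 0 1)^2 ≤ (Lam - A 0 0)*(Lam - A 1 1) := by nlinarith [h6']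
  simp only [Matrix.trace_fin_two, Matrix.mul_apply, Fin.sum_univ_two] at htr
  rw [hb, hq] at htr
  have hz : A 0 0 * S 0 0 + 2 * A 0 1 * S 0 1 + A 1 1 * S 1 1 = 0 := by linarith
  have key := key_scalar (A 0 0) (A 0 1) (A 1 1) (S 0 0) (S 0 1) (S 1 1)
    lam Lam hlam hlamLam h1 h2 h3 h4 h5 h6 hz
  have hCeq : (Lam/lam)^2*(Lam/lam+lam/Lam) = (Lam^4+Lam^2*lam^2)/(lam^3*Lam) := by
    field_simp
  rw [hCeq, div_mul_eq_mul_div, le_div_iff₀ (by positivity)]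
  simp only [Matrix.trace_fin_two, Matrix.mul_apply, Fin.sum_univ_two, Matrix.det_fin_two]
  rw [hb, hq]
  have hz3 : lam^3*Lam*(A 0 0 * S 0 0 + 2 * A 0 1 * S 0 1 + A 1 1 * S 1 1)^2 = 0 := by
    rw [hz]; ring
  nlinarith [key, hz3]
end

section
/- Let A and S be 2×2 real symmetric matrices with tr(A S) = 0, S invertible, and λ I ≤ A ≤ Λ I in the Loewner order for constants 0 < λ ≤ Λ. Set K = det(A) det(S) (so K < 0), M = S A² S, and c = (Λ/λ)² (Λ/λ + λ/Λ). Then M is symmetric positive definite and for every v ∈ ℝ²: c⁻¹ (−1/K) |v|² ≤ ⟨M⁻¹ v, v⟩ ≤ c (−1/K) |v|². (This is the pointwise content of the comparison between the induced metric and the pullback metric via the anisotropic Gauss map on a γ-anisotropic minimal surface at a regular point of the anisotropic Gauss map.) -/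
set_option maxHeartbeats 1000000

open Matrix

private theorem quad_form_nonneg_s10 {α β γ : ℝ} (hα : 0 ≤ α) (hγ : 0 ≤ γ)
    (hd : β^2 ≤ α*γ) (x y : ℝ) : 0 ≤ α*x^2 + 2*β*x*y + γ*y^2 := by
  rcases eq_or_lt_of_le hα with h|h
  · have hβ : β = 0 := by nlinarith [sq_nonneg β]
    rw [hβ, ← h]
    nlinarith [mul_nonneg hγ (sq_nonneg y)]
  · nlinarith [sq_nonneg (α*x + β*y), mul_nonneg (sub_nonneg.2 hd) (sq_nonneg y)]

/-- `|A u|² ≤ Λ² |u|²` for a symmetric 2×2 matrix with `A ≤ Λ I` and `0 ≤ A`. -/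
private theorem row_upper {lam Lam a b d : ℝ} (hlam : 0 < lam)
    (hal : lam ≤ a) (hdl : lam ≤ d) (haL : a ≤ Lam) (hdL : d ≤ Lam)
    (hC2 : b^2 ≤ (Lam - a)*(Lam - d)) (u0 u1 : ℝ) :
    (a*u0 + b*u1)^2 + (b*u0 + d*u1)^2 ≤ Lam^2*(u0^2 + u1^2) := by
  have hLam : 0 < Lam := lt_of_lt_of_le hlam (le_trans hal haL)
  have hplus : 0 ≤ (Lam + a)*(Lam + d) - b^2 := by
    have h2 : 0 ≤ 2*Lam*(a + d) := mul_nonneg (by linarith) (by linarith)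
    linarith [hC2]
  have hα : 0 ≤ Lam^2 - a^2 - b^2 := by
    have aux : 0 ≤ (Lam - a)*(a + d) := by
      apply mul_nonneg <;> linarith
    linarith [hC2]
  have hγ : 0 ≤ Lam^2 - d^2 - b^2 := by
    have aux : 0 ≤ (Lam - d)*(a + d) := by
      apply mul_nonneg <;> linarith
    linarith [hC2]
  have hdisc : (-(b*(a + d)))^2 ≤ (Lam^2 - a^2 - b^2)*(Lam^2 - d^2 - b^2) := by
    have key := mul_nonneg (sub_nonneg.2 hC2) hplus
    nlinarith [key]
  have h := quad_form_nonneg_s10 hα hγ hdisc u0 u1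
  nlinarith [h]

private theorem b_sq_le_d {lam Lam a b d : ℝ}
    (hal : lam ≤ a) (hdl : lam ≤ d) (haL : a ≤ Lam) (hdL : d ≤ Lam)
    (hC1 : b^2 ≤ (a - lam)*(d - lam)) (hC2 : b^2 ≤ (Lam - a)*(Lam - d)) :
    b^2 ≤ (d - lam)*(Lam - d) := by
  rcases le_total (a + d) (lam + Lam) with h|h
  · have aux : 0 ≤ (lam + Lam - a - d)*(d - lam) := by
      apply mul_nonneg <;> linarith
    nlinarith [hC1, aux]
  · have aux : 0 ≤ (Lam - d)*(a + d - lam - Lam) := by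
      apply mul_nonneg <;> linarith
    nlinarith [hC2, aux]

private theorem D_nonneg {lam Lam a b d : ℝ} (hlam : 0 < lam) (hlamLam : lam ≤ Lam)
    (hal : lam ≤ a) (hdl : lam ≤ d) (haL : a ≤ Lam) (hdL : d ≤ Lam)
    (hC1 : b^2 ≤ (a - lam)*(d - lam)) (hC2 : b^2 ≤ (Lam - a)*(Lam - d)) :
    0 ≤ (Lam*d - lam*a)*(Lam*a - lam*d) - (lam + Lam)^2*b^2 := by
  have hLam : 0 < Lam := lt_of_lt_of_le hlam hlamLam
  rcases le_total (a + d) (lam + Lam) with h|h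
  · have aux1 : 0 ≤ (lam + Lam)^2*((a - lam)*(d - lam) - b^2) :=
      mul_nonneg (sq_nonneg _) (by linarith)
    have aux2 : 0 ≤ lam*(lam + Lam - (a + d))*(Lam*(a + d) - lam*(lam + Lam)) := by
      apply mul_nonneg (mul_nonneg hlam.le (by linarith))
      nlinarith
    nlinarith [aux1, aux2]
  · have aux1 : 0 ≤ (lam + Lam)^2*((Lam - a)*(Lam - d) - b^2) :=
      mul_nonneg (sq_nonneg _) (by linarith)
    have aux2 : 0 ≤ Lam*((a + d) - (lam + Lam))*(Lam*(lam + Lam) - lam*(a + d)) := by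
      apply mul_nonneg (mul_nonneg hLam.le (by linarith))
      nlinarith
    nlinarith [aux1, aux2]

/-- The key inequality `λΛ (tr S)² ≤ (Λ-λ)² (-det S)` for `tr (A S) = 0`. -/
private theorem star2 {lam Lam a b d p q r : ℝ} (hlam : 0 < lam) (hlamLam : lam ≤ Lam)
    (hal : lam ≤ a) (hdl : lam ≤ d) (haL : a ≤ Lam) (hdL : d ≤ Lam)
    (hC1 : b^2 ≤ (a - lam)*(d - lam)) (hC2 : b^2 ≤ (Lam - a)*(Lam - d))
    (htrs : a*p + 2*b*q + d*r = 0) :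
    lam*Lam*(p + r)^2 ≤ (Lam - lam)^2*(q^2 - p*r) := by
  have hLam : 0 < Lam := lt_of_lt_of_le hlam hlamLam
  have hd0 : 0 < d := lt_of_lt_of_le hlam hdl
  have hf1 : 0 ≤ Lam*a - lam*d := by nlinarith
  have hf2 : 0 ≤ Lam*d - lam*a := by nlinarith
  have hαnn : 0 ≤ (Lam*a - lam*d)*(Lam*d - lam*a) := mul_nonneg hf1 hf2
  have hb2d := b_sq_le_d hal hdl haL hdL hC1 hC2
  have hγnn : 0 ≤ d^2*(Lam - lam)^2 - 4*lam*Lam*b^2 := by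
    have aux : 0 ≤ 4*(lam*Lam)*((d - lam)*(Lam - d) - b^2) :=
      mul_nonneg (by positivity) (by linarith)
    nlinarith [sq_nonneg (d*(lam + Lam) - 2*lam*Lam), aux]
  have hD := D_nonneg hlam hlamLam hal hdl haL hdL hC1 hC2
  have hdiscm : (b*(d*(Lam - lam)^2 + 2*lam*Lam*(d - a)))^2
      ≤ ((Lam*a - lam*d)*(Lam*d - lam*a))*(d^2*(Lam - lam)^2 - 4*lam*Lam*b^2) := by
    nlinarith [mul_nonneg (mul_nonneg (sq_nonneg d) (sq_nonneg (Lam - lam))) hD]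
  have hform := quad_form_nonneg_s10 hαnn hγnn hdiscm p q
  have hkey : d^2*((Lam - lam)^2*(q^2 - p*r) - lam*Lam*(p + r)^2)
      = ((Lam*a - lam*d)*(Lam*d - lam*a))*p^2
        + 2*(b*(d*(Lam - lam)^2 + 2*lam*Lam*(d - a)))*p*q
        + (d^2*(Lam - lam)^2 - 4*lam*Lam*b^2)*q^2 := by
    linear_combination (a*lam*Lam*p + 2*b*lam*Lam*q - d*Lam^2*p - d*lam*Lam*r
      - d*lam^2*p) * htrs
  nlinarith [hform, hkey, mul_pos hd0 hd0]

/-- The Frobenius-norm bound `λ³ ‖A S‖² ≤ Λ(Λ²+λ²) det A (-det S)`. -/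
private theorem frob_bound {lam Lam a b d p q r : ℝ} (hlam : 0 < lam) (hlamLam : lam ≤ Lam)
    (hal : lam ≤ a) (hdl : lam ≤ d) (haL : a ≤ Lam) (hdL : d ≤ Lam)
    (hC1 : b^2 ≤ (a - lam)*(d - lam)) (hC2 : b^2 ≤ (Lam - a)*(Lam - d))
    (htrs : a*p + 2*b*q + d*r = 0) :
    lam^3*((a*p + b*q)^2 + (a*q + b*r)^2 + (b*p + d*q)^2 + (b*q + d*r)^2)
      ≤ Lam*(Lam^2 + lam^2)*((a*d - b^2)*(q^2 - p*r)) := by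
  have hLam : 0 < Lam := lt_of_lt_of_le hlam hlamLam
  have ha0 : 0 < a := lt_of_lt_of_le hlam hal
  have hd0 : 0 < d := lt_of_lt_of_le hlam hdl
  have hdetA_ge : lam^2 ≤ a*d - b^2 := by nlinarith [hC1]
  have hdetS_nonpos : 0 ≤ q^2 - p*r := by
    have hid : a*d*(q^2 - p*r) = (a*p + b*q)^2 + (a*d - b^2)*q^2 := by
      linear_combination (-(a*p)) * htrs
    nlinarith [sq_nonneg (a*p + b*q), sq_nonneg q, mul_pos ha0 hd0, hid,
      mul_nonneg (sub_nonneg.2 hdetA_ge) (sq_nonneg q), sq_nonneg lam]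
  have h1 := row_upper hlam hal hdl haL hdL hC2 p q
  have h2 := row_upper hlam hal hdl haL hdL hC2 q r
  have hs2 := star2 hlam hlamLam hal hdl haL hdL hC1 hC2 htrs
  -- λΛ (p² + 2q² + r²) ≤ (λ² + Λ²)(q² - pr)
  have hS2 : lam*Lam*(p^2 + 2*q^2 + r^2) ≤ (lam^2 + Lam^2)*(q^2 - p*r) := by
    nlinarith [hs2, mul_pos hlam hLam]
  -- combine
  have e1 : lam^3*((a*p + b*q)^2 + (a*q + b*r)^2 + (b*p + d*q)^2 + (b*q + d*r)^2)
      ≤ lam^3*(Lam^2*(p^2 + 2*q^2 + r^2)) := by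
    have := mul_le_mul_of_nonneg_left (add_le_add h1 h2) (by positivity : (0:ℝ) ≤ lam^3)
    nlinarith [this]
  have e2 : lam^3*(Lam^2*(p^2 + 2*q^2 + r^2)) ≤ lam^2*Lam*((lam^2 + Lam^2)*(q^2 - p*r)) := by
    have := mul_le_mul_of_nonneg_left hS2 (by positivity : (0:ℝ) ≤ lam^2*Lam)
    nlinarith [this]
  have e3 : lam^2*Lam*((lam^2 + Lam^2)*(q^2 - p*r))
      ≤ Lam*(Lam^2 + lam^2)*((a*d - b^2)*(q^2 - p*r)) := by
    have := mul_le_mul_of_nonneg_right hdetA_ge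
      (mul_nonneg (mul_nonneg hLam.le (by positivity)) hdetS_nonpos)
    nlinarith [this]
  linarith [e1, e2, e3]

private theorem final_lb {K c T F s : ℝ} (hK : K < 0) (hc : 0 < c) (hT : 0 ≤ T)
    (hs : 0 < s) (hFK : F ≤ c*(-K)) (hlb : K^2*s^2 ≤ T*(F*s)) : (-K)*s ≤ c*T := by
  have hTF : T*(F*s) ≤ T*(c*(-K)*s) := by
    apply mul_le_mul_of_nonneg_left _ hT
    exact mul_le_mul_of_nonneg_right hFK hs.le
  nlinarith [hlb, hTF, mul_pos (neg_pos.2 hK) hs]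

/-- Let `A`, `S` be 2×2 real symmetric matrices with `tr(A S) = 0`, `S`
invertible, and `λ I ≤ A ≤ Λ I` for `0 < λ ≤ Λ`. With `K = det(A) det(S)`, `M = S A² S`
and `c = (Λ/λ)² (Λ/λ + λ/Λ)`, one has `K < 0`, `M` is positive definite, and for all `v`:
`c⁻¹ (−1/K) |v|² ≤ ⟨M⁻¹ v, v⟩ ≤ c (−1/K) |v|²`. -/
theorem pullback_metric_comparison
    (A S : Matrix (Fin 2) (Fin 2) ℝ) (hA : A.IsSymm) (hS : S.IsSymm)
    (htr : (A * S).trace = 0) (hSinv : IsUnit S.det)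
    (lam Lam : ℝ) (hlam : 0 < lam) (hlamLam : lam ≤ Lam)
    (hlow : (A - lam • (1 : Matrix (Fin 2) (Fin 2) ℝ)).PosSemidef)
    (hupp : ((Lam • (1 : Matrix (Fin 2) (Fin 2) ℝ)) - A).PosSemidef)
    (K : ℝ) (hK : K = A.det * S.det)
    (M : Matrix (Fin 2) (Fin 2) ℝ) (hM : M = S * (A * A) * S)
    (c : ℝ) (hc : c = (Lam / lam) ^ 2 * (Lam / lam + lam / Lam)) :
    K < 0 ∧ M.PosDef ∧
      ∀ v : Fin 2 → ℝ,
        c⁻¹ * (-1 / K) * (∑ i, v i ^ 2) ≤ M⁻¹.mulVec v ⬝ᵥ v ∧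
          M⁻¹.mulVec v ⬝ᵥ v ≤ c * (-1 / K) * (∑ i, v i ^ 2) := by
  have hLam : 0 < Lam := lt_of_lt_of_le hlam hlamLam
  have hb : A 1 0 = A 0 1 := hA.apply 0 1
  have hqs : S 1 0 = S 0 1 := hS.apply 0 1
  set a := A 0 0 with ha_def
  set b := A 0 1 with hb_def
  set d := A 1 1 with hd_def
  set p := S 0 0 with hp_def
  set q := S 0 1 with hq_def
  set r := S 1 1 with hr_def
  have htrs : a*p + 2*b*q + d*r = 0 := by
    simp [Matrix.trace_fin_two, Matrix.mul_apply, Fin.sum_univ_two] at htr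
    rw [hb, hqs] at htr
    linarith
  have hQl : ∀ t : ℝ, 0 ≤ (a - lam)*(t*t) + (2*b)*t + (d - lam) := by
    intro t
    have h := hlow.dotProduct_mulVec_nonneg ![t, 1]
    simp [dotProduct, mulVec, Fin.sum_univ_two, Matrix.sub_apply, Matrix.smul_apply,
      Matrix.one_apply, smul_eq_mul] at h
    rw [hb] at h
    nlinarith [h]
  have hQu : ∀ t : ℝ, 0 ≤ (Lam - a)*(t*t) + (-(2*b))*t + (Lam - d) := by
    intro t
    have h := hupp.dotProduct_mulVec_nonneg ![t, 1]
    simp [dotProduct, mulVec, Fin.sum_univ_two, Matrix.sub_apply, Matrix.smul_apply,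
      Matrix.one_apply, smul_eq_mul] at h
    rw [hb] at h
    nlinarith [h]
  have hal : lam ≤ a := by
    have h := hlow.dotProduct_mulVec_nonneg ![1, 0]
    simp [dotProduct, mulVec, Fin.sum_univ_two, Matrix.sub_apply, Matrix.smul_apply,
      Matrix.one_apply, smul_eq_mul] at h
    linarith
  have hdl : lam ≤ d := by
    have h := hlow.dotProduct_mulVec_nonneg ![0, 1]
    simp [dotProduct, mulVec, Fin.sum_univ_two, Matrix.sub_apply, Matrix.smul_apply,
      Matrix.one_apply, smul_eq_mul] at h
    linarith
  have haL : a ≤ Lam := by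
    have h := hupp.dotProduct_mulVec_nonneg ![1, 0]
    simp [dotProduct, mulVec, Fin.sum_univ_two, Matrix.sub_apply, Matrix.smul_apply,
      Matrix.one_apply, smul_eq_mul] at h
    linarith
  have hdL : d ≤ Lam := by
    have h := hupp.dotProduct_mulVec_nonneg ![0, 1]
    simp [dotProduct, mulVec, Fin.sum_univ_two, Matrix.sub_apply, Matrix.smul_apply,
      Matrix.one_apply, smul_eq_mul] at h
    linarith
  have hC1 : b^2 ≤ (a - lam)*(d - lam) := by
    have h := discrim_le_zero (a := a - lam) (b := 2*b) (c := d - lam) hQl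
    simp only [discrim] at h
    nlinarith [h]
  have hC2 : b^2 ≤ (Lam - a)*(Lam - d) := by
    have h := discrim_le_zero (a := Lam - a) (b := -(2*b)) (c := Lam - d) hQu
    simp only [discrim] at h
    nlinarith [h]
  have ha0 : 0 < a := lt_of_lt_of_le hlam hal
  have hd0 : 0 < d := lt_of_lt_of_le hlam hdl
  have hdetA : A.det = a*d - b^2 := by
    rw [Matrix.det_fin_two, hb]; ring
  have hdetS : S.det = p*r - q^2 := by
    rw [Matrix.det_fin_two, hqs]; ring
  have hdetA_ge : lam^2 ≤ a*d - b^2 := by nlinarith [hC1]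
  have hdetS_nonpos : p*r - q^2 ≤ 0 := by
    have hid : a*d*(q^2 - p*r) = (a*p + b*q)^2 + (a*d - b^2)*q^2 := by
      linear_combination (-(a*p)) * htrs
    nlinarith [sq_nonneg (a*p + b*q), mul_pos ha0 hd0, hid,
      mul_nonneg (sub_nonneg.2 hdetA_ge) (sq_nonneg q)]
  have hdetS_ne : p*r - q^2 ≠ 0 := by
    rw [← hdetS]; exact hSinv.ne_zero
  have hdetS_neg : p*r - q^2 < 0 := lt_of_le_of_ne hdetS_nonpos hdetS_ne
  have hKneg : K < 0 := by
    rw [hK, hdetA, hdetS]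
    exact mul_neg_of_pos_of_neg (by nlinarith) hdetS_neg
  have hK0 : K ≠ 0 := hKneg.ne
  -- entries of X = A S
  set x00 := a*p + b*q with hx00_def
  set x01 := a*q + b*r with hx01_def
  set x10 := b*p + d*q with hx10_def
  set x11 := b*q + d*r with hx11_def
  have hX : x00*x11 - x01*x10 = K := by
    rw [hK, hdetA, hdetS, hx00_def, hx01_def, hx10_def, hx11_def]; ring
  have hMe : M = !![x00^2 + x10^2, x00*x01 + x10*x11;
                    x00*x01 + x10*x11, x01^2 + x11^2] := by
    rw [hM]
    ext i j
    fin_cases i <;> fin_cases j <;>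
      · simp [Matrix.mul_apply, Fin.sum_univ_two, hb, hqs,
          hx00_def, hx01_def, hx10_def, hx11_def]
        ring
  set F := x00^2 + x01^2 + x10^2 + x11^2 with hF_def
  have hcval : c = Lam*(Lam^2 + lam^2)/lam^3 := by
    rw [hc]; field_simp
  have hcpos : 0 < c := by rw [hcval]; positivity
  have hFK : F ≤ c * (-K) := by
    have h := frob_bound hlam hlamLam hal hdl haL hdL hC1 hC2 htrs
    rw [hcval, hK, hdetA, hdetS, hF_def, hx00_def, hx01_def, hx10_def, hx11_def]
    rw [div_mul_eq_mul_div, le_div_iff₀ (by positivity)]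
    linarith [h]
  -- positive definiteness of M
  have hMherm : M.IsHermitian := by
    rw [Matrix.IsHermitian, hMe]
    ext i j
    fin_cases i <;> fin_cases j <;> simp [Matrix.conjTranspose_apply]
  have hMposdef : M.PosDef := by
    refine Matrix.PosDef.of_dotProduct_mulVec_pos hMherm (fun x hx => ?_)
    have hxv : x 0 ≠ 0 ∨ x 1 ≠ 0 := by
      by_contra h
      push_neg at h
      apply hx
      funext i
      fin_cases i <;> simp [h.1, h.2]
    have hform : dotProduct (star x) (M *ᵥ x)
        = (x00*(x 0) + x01*(x 1))^2 + (x10*(x 0) + x11*(x 1))^2 := by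
      rw [hMe]
      simp [dotProduct, mulVec, Fin.sum_univ_two]
      ring
    rw [hform]
    by_contra hcon
    push_neg at hcon
    have hz0 : x00*(x 0) + x01*(x 1) = 0 := by
      have h0' : (x00*(x 0) + x01*(x 1))^2 = 0 :=
        le_antisymm (by linarith [sq_nonneg (x10*(x 0) + x11*(x 1))]) (sq_nonneg _)
      exact pow_eq_zero_iff (two_ne_zero) |>.mp h0'
    have hz1 : x10*(x 0) + x11*(x 1) = 0 := by
      have h1' : (x10*(x 0) + x11*(x 1))^2 = 0 :=
        le_antisymm (by linarith [sq_nonneg (x00*(x 0) + x01*(x 1))]) (sq_nonneg _)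
      exact pow_eq_zero_iff (two_ne_zero) |>.mp h1'
    have h0 : K * (x 0) = 0 := by
      linear_combination x11 * hz0 - x01 * hz1 - (x 0) * hX
    have h1 : K * (x 1) = 0 := by
      linear_combination x00 * hz1 - x10 * hz0 - (x 1) * hX
    rcases hxv with h|h
    · rcases mul_eq_zero.mp h0 with h'|h'
      · exact hK0 h'
      · exact h h'
    · rcases mul_eq_zero.mp h1 with h'|h'
      · exact hK0 h'
      · exact h h'
  refine ⟨hKneg, hMposdef, fun v => ?_⟩
  have hK2 : (0:ℝ) < K^2 := by positivity
  have hMinv : M⁻¹ = (K^2)⁻¹ • !![x01^2 + x11^2, -(x00*x01 + x10*x11);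
      -(x00*x01 + x10*x11), x00^2 + x10^2] := by
    apply Matrix.inv_eq_right_inv
    rw [hMe]
    ext i j
    fin_cases i <;> fin_cases j <;>
      · simp [Matrix.mul_apply, Fin.sum_univ_two, Matrix.smul_apply, Matrix.one_apply,
          smul_eq_mul]
        field_simp
        first
        | linear_combination (x00*x11 - x01*x10 + K) * hX
        | linear_combination (-(x00*x11 - x01*x10 + K)) * hX
        | ring
  have hsum : (∑ i, v i ^ 2) = (v 0)^2 + (v 1)^2 := by
    rw [Fin.sum_univ_two]
  have hdot : M⁻¹ *ᵥ v ⬝ᵥ v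
      = (K^2)⁻¹ * ((x00*(v 1) - x01*(v 0))^2 + (x10*(v 1) - x11*(v 0))^2) := by
    rw [hMinv]
    simp [dotProduct, mulVec, Fin.sum_univ_two, Matrix.smul_apply, smul_eq_mul]
    ring
  have hs_nn : (0:ℝ) ≤ (v 0)^2 + (v 1)^2 := by positivity
  have hT_nn : (0:ℝ) ≤ (x00*(v 1) - x01*(v 0))^2 + (x10*(v 1) - x11*(v 0))^2 := by positivity
  have hub : (x00*(v 1) - x01*(v 0))^2 + (x10*(v 1) - x11*(v 0))^2
      ≤ F * ((v 0)^2 + (v 1)^2) := by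
    rw [hF_def]
    linarith [sq_nonneg (x00*(v 0) + x01*(v 1)), sq_nonneg (x10*(v 0) + x11*(v 1))]
  have hlb : K^2*((v 0)^2 + (v 1)^2)^2
      ≤ ((x00*(v 1) - x01*(v 0))^2 + (x10*(v 1) - x11*(v 0))^2)
        * (F * ((v 0)^2 + (v 1)^2)) := by
    have hcross : ((x00*(v 1) - x01*(v 0))*(x10*(v 0) + x11*(v 1))
        - (x10*(v 1) - x11*(v 0))*(x00*(v 0) + x01*(v 1)))^2
        = K^2*((v 0)^2 + (v 1)^2)^2 := by
      have e : (x00*(v 1) - x01*(v 0))*(x10*(v 0) + x11*(v 1))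
          - (x10*(v 1) - x11*(v 0))*(x00*(v 0) + x01*(v 1))
          = (x00*x11 - x01*x10)*((v 0)^2 + (v 1)^2) := by
        ring
      rw [e, hX]
      ring
    have hcs : ((x00*(v 1) - x01*(v 0))*(x10*(v 0) + x11*(v 1))
        - (x10*(v 1) - x11*(v 0))*(x00*(v 0) + x01*(v 1)))^2
        ≤ ((x00*(v 1) - x01*(v 0))^2 + (x10*(v 1) - x11*(v 0))^2)
          * ((x00*(v 0) + x01*(v 1))^2 + (x10*(v 0) + x11*(v 1))^2) := by
      linarith [sq_nonneg ((x00*(v 1) - x01*(v 0))*(x00*(v 0) + x01*(v 1))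
        + (x10*(v 1) - x11*(v 0))*(x10*(v 0) + x11*(v 1)))]
    have hXv : (x00*(v 0) + x01*(v 1))^2 + (x10*(v 0) + x11*(v 1))^2
        ≤ F * ((v 0)^2 + (v 1)^2) := by
      rw [hF_def]
      linarith [sq_nonneg (x00*(v 1) - x01*(v 0)), sq_nonneg (x10*(v 1) - x11*(v 0))]
    calc K^2*((v 0)^2 + (v 1)^2)^2 = _ := hcross.symm
      _ ≤ _ := hcs
      _ ≤ _ := mul_le_mul_of_nonneg_left hXv hT_nn
  have hnegK : 0 < -K := by linarith
  have hTub : (x00*(v 1) - x01*(v 0))^2 + (x10*(v 1) - x11*(v 0))^2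
      ≤ c*(-K)*((v 0)^2 + (v 1)^2) :=
    le_trans hub (mul_le_mul_of_nonneg_right hFK hs_nn)
  have hTlb : (-K)*((v 0)^2 + (v 1)^2)
      ≤ c*((x00*(v 1) - x01*(v 0))^2 + (x10*(v 1) - x11*(v 0))^2) := by
    rcases eq_or_lt_of_le hs_nn with hs|hs
    · rw [← hs, mul_zero]
      exact mul_nonneg hcpos.le hT_nn
    · exact final_lb hKneg hcpos hT_nn hs hFK hlb
  rw [hsum, hdot]
  constructor
  · have e1 : c⁻¹ * (-1 / K) * ((v 0)^2 + (v 1)^2)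
        = ((-K)*((v 0)^2 + (v 1)^2)) / (c*K^2) := by
      field_simp
    have e2 : (K^2)⁻¹ * ((x00*(v 1) - x01*(v 0))^2 + (x10*(v 1) - x11*(v 0))^2)
        = (c*((x00*(v 1) - x01*(v 0))^2 + (x10*(v 1) - x11*(v 0))^2)) / (c*K^2) := by
      field_simp
    rw [e1, e2]
    gcongr
  · have e1 : (K^2)⁻¹ * ((x00*(v 1) - x01*(v 0))^2 + (x10*(v 1) - x11*(v 0))^2)
        = ((x00*(v 1) - x01*(v 0))^2 + (x10*(v 1) - x11*(v 0))^2) / K^2 := by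
      rw [inv_mul_eq_div]
    have e2 : c * (-1 / K) * ((v 0)^2 + (v 1)^2)
        = (c*(-K)*((v 0)^2 + (v 1)^2)) / K^2 := by
      field_simp
    rw [e1, e2]
    gcongr
end

section
/- Let γ̄ : ℝ³ → ℝ be smooth on ℝ³ \ {0}, positively 1-homogeneous, positive on ℝ³ \ {0}, and a convex integrand, i.e. D²γ̄(w)[v, v] > 0 for every w ≠ 0 and every v ∈ ℝ³ not proportional to w. Let Ω ⊆ ℝ² be open and let u : Ω → ℝ be smooth and satisfy the anisotropic minimal surface equation Σ_{i,j=1}^{2} ∂_i∂_jγ̄(−∂₁u(x), −∂₂u(x), 1) · ∂_i∂_ju(x) = 0 for all x ∈ Ω. Then det(Hess u(x)) ≤ 0 for every x ∈ Ω; that is, the graph of u has nonpositive Gaussian curvature. -/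
lemma not_prop_aux (x y : ℝ) (v : Fin 3 → ℝ) (hv2 : v 2 = 0) (hvne : v ≠ 0) :
    ¬ ∃ t : ℝ, v = t • ![x, y, 1] := by
  rintro ⟨t, ht⟩
  have h2 : v 2 = t * 1 := by rw [ht]; simp
  have ht0 : t = 0 := by simpa [hv2] using h2.symm
  apply hvne
  rw [ht, ht0]; simp


lemma disc_aux (a b c d : ℝ) (hd : 0 < d)
    (h : 0 < (2*d)*((2*d)*a - (b+c)*b) - (b+c)*((2*d)*c - (b+c)*d)) :
    (b+c)^2 < 4*a*d := by nlinarith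

lemma alg_aux (a b c d p q r : ℝ) (ha : 0 < a) (hd : 0 < d)
    (hdisc : (b+c)^2 < 4*a*d) (heq : a*p + b*q + c*q + d*r = 0) :
    p * r - q * q ≤ 0 := by
  by_contra hgoal
  push_neg at hgoal
  have key : (a*p+d*r)^2 = ((b+c)*q)^2 := by
    have h : a*p+d*r = -((b+c)*q) := by linarith
    rw [h]; ring
  nlinarith [key, sq_nonneg (a*p - d*r), mul_pos ha hd, sq_nonneg q, hdisc,
    mul_pos (mul_pos ha hd) hgoal]

/-- If `u` solves the anisotropic minimal surface equation
`Σ_{i,j} ∂_i∂_jγ(−∇u, 1) ∂_i∂_ju = 0` on an open set `Ω ⊆ ℝ²`, with `γ` a smooth, positive,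
positively 1-homogeneous convex integrand on `ℝ³ \ {0}`, then `det(Hess u) ≤ 0` on `Ω`;
i.e. the graph of `u` has nonpositive Gaussian curvature. -/
theorem anisotropic_minimal_graph_det_hessian_nonpos
    (γ : (Fin 3 → ℝ) → ℝ)
    (hsmooth : ContDiffOn ℝ (⊤ : ℕ∞) γ {(0 : Fin 3 → ℝ)}ᶜ)
    (hhom : ∀ t : ℝ, 0 < t → ∀ x : Fin 3 → ℝ, γ (t • x) = t * γ x)
    (hpos : ∀ w : Fin 3 → ℝ, w ≠ 0 → 0 < γ w)
    (hconv : ∀ w : Fin 3 → ℝ, w ≠ 0 → ∀ v : Fin 3 → ℝ, (¬ ∃ t : ℝ, v = t • w) →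
      0 < fderiv ℝ (fderiv ℝ γ) w v v)
    (Ω : Set (Fin 2 → ℝ)) (hΩ : IsOpen Ω)
    (u : (Fin 2 → ℝ) → ℝ) (hu : ContDiffOn ℝ (⊤ : ℕ∞) u Ω)
    (heq : ∀ x ∈ Ω,
      ∑ i : Fin 2, ∑ j : Fin 2,
        fderiv ℝ (fderiv ℝ γ)
            ![-(fderiv ℝ u x (Pi.single 0 1)), -(fderiv ℝ u x (Pi.single 1 1)), 1]
            (Pi.single i.castSucc 1) (Pi.single j.castSucc 1)
          * fderiv ℝ (fderiv ℝ u) x (Pi.single i 1) (Pi.single j 1) = 0) :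
    ∀ x ∈ Ω,
      (Matrix.of fun i j : Fin 2 =>
        fderiv ℝ (fderiv ℝ u) x (Pi.single i 1) (Pi.single j 1)).det ≤ 0 := by
  intro x hx
  set w : Fin 3 → ℝ :=
    ![-(fderiv ℝ u x (Pi.single 0 1)), -(fderiv ℝ u x (Pi.single 1 1)), 1] with hw
  have hwne : w ≠ 0 := by
    intro h
    have := congrFun h 2
    simp [hw] at this
  set B := fderiv ℝ (fderiv ℝ γ) w with hB
  have hc0 : (Pi.single ((0:Fin 2).castSucc) 1 : Fin 3 → ℝ) = Pi.single (0:Fin 3) 1 := rfl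
  have hc1 : (Pi.single ((1:Fin 2).castSucc) 1 : Fin 3 → ℝ) = Pi.single (1:Fin 3) 1 := rfl
  set e0 : Fin 3 → ℝ := Pi.single (0:Fin 3) 1 with he0
  set e1 : Fin 3 → ℝ := Pi.single (1:Fin 3) 1 with he1
  set a := B e0 e0 with ha'
  set b := B e0 e1 with hb'
  set c := B e1 e0 with hc'
  set d := B e1 e1 with hd'
  -- positivity facts
  have he0ne : e0 ≠ 0 := by
    intro h; have := congrFun h 0; simp [he0] at this
  have he1ne : e1 ≠ 0 := by
    intro h; have := congrFun h 1; simp [he1] at this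
  have ha : 0 < a := hconv w hwne e0 (not_prop_aux _ _ _ (by simp [he0, Pi.single]) he0ne)
  have hd : 0 < d := hconv w hwne e1 (not_prop_aux _ _ _ (by simp [he1, Pi.single]) he1ne)
  -- discriminant
  set v : Fin 3 → ℝ := (2*d) • e0 - (b+c) • e1 with hv
  have hv2 : v 2 = 0 := by simp [hv, he0, he1]
  have hvne : v ≠ 0 := by
    intro h
    have := congrFun h 0
    simp [hv, he0, he1] at this
    nlinarith
  have hBv : 0 < B v v := hconv w hwne v (not_prop_aux _ _ _ hv2 hvne)
  have hBvv : B v v = (2*d)*((2*d)*a - (b+c)*b) - (b+c)*((2*d)*c - (b+c)*d) := by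
    simp [hv, map_sub, map_smul, ContinuousLinearMap.sub_apply,
      ContinuousLinearMap.smul_apply, smul_eq_mul, ← ha', ← hb', ← hc', ← hd']
    ring
  have hdisc : (b+c)^2 < 4*a*d := disc_aux a b c d hd (hBvv ▸ hBv)
  -- Hessian entries
  set p := fderiv ℝ (fderiv ℝ u) x (Pi.single (0:Fin 2) 1) (Pi.single (0:Fin 2) 1) with hp'
  set q := fderiv ℝ (fderiv ℝ u) x (Pi.single (0:Fin 2) 1) (Pi.single (1:Fin 2) 1) with hq'
  set q2 := fderiv ℝ (fderiv ℝ u) x (Pi.single (1:Fin 2) 1) (Pi.single (0:Fin 2) 1) with hq2'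
  set r := fderiv ℝ (fderiv ℝ u) x (Pi.single (1:Fin 2) 1) (Pi.single (1:Fin 2) 1) with hr'
  clear_value p q q2 r
  have hsymm : q2 = q := by
    have h := (hu.contDiffAt (hΩ.mem_nhds hx)).isSymmSndFDerivAt (by rw [minSmoothness_of_isRCLikeNormedField]; exact WithTop.coe_le_coe.mpr le_top) 
    rw [hq2', hq']
    exact h _ _
  have heqx := heq x hx
  rw [Fin.sum_univ_two] at heqx
  rw [Fin.sum_univ_two, Fin.sum_univ_two] at heqx
  rw [hc0, hc1] at heqx
  rw [← hw] at heqx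
  rw [← hB] at heqx
  have heq2 : a * p + b * q + c * q2 + d * r = 0 := by
    rw [ha', hb', hc', hd', hp', hq', hq2', hr']
    linarith [heqx]
  rw [hsymm] at heq2
  -- determinant
  have hdet : (Matrix.of fun i j : Fin 2 =>
      fderiv ℝ (fderiv ℝ u) x (Pi.single i 1) (Pi.single j 1)).det = p * r - q * q2 := by
    rw [Matrix.det_fin_two]
    simp [hp', hq', hq2', hr']
  rw [hdet, hsymm]
  exact alg_aux a b c d p q r ha hd hdisc heq2
end

section
/- Let γ̄ : ℝ³ → ℝ be smooth on ℝ³ \ {0}, positively 1-homogeneous, positive on ℝ³ \ {0}, and a convex integrand, i.e. D²γ̄(w)[v, v] > 0 for every w ≠ 0 and every v ∈ ℝ³ not proportional to w. Let Ω ⊆ ℝ² be open and let u : Ω → ℝ be smooth and satisfy Σ_{i,j=1}^{2} ∂_i∂_jγ̄(−∂₁u(x), −∂₂u(x), 1) · ∂_i∂_ju(x) = 0 on Ω. Then for every x ∈ Ω, det(Hess u(x)) = 0 implies Hess u(x) = 0. In other words, at a critical point of the Gauss map of the graph of u the full second fundamental form vanishes. -/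
/-- If `u` solves the anisotropic minimal surface equation
`Σ_{i,j} ∂_i∂_jγ(−∇u, 1) ∂_i∂_ju = 0` on an open set `Ω ⊆ ℝ²`, with `γ` a smooth, positive,
positively 1-homogeneous convex integrand on `ℝ³ \ {0}`, then `det(Hess u(x)) = 0` implies
`Hess u(x) = 0` for `x ∈ Ω`: at a critical point of the Gauss map of the graph of `u` the
full second fundamental form vanishes. -/
theorem anisotropic_minimal_graph_hessian_vanishes_at_critical
    (γ : (Fin 3 → ℝ) → ℝ)
    (hsmooth : ContDiffOn ℝ (⊤ : ℕ∞) γ {(0 : Fin 3 → ℝ)}ᶜ)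
    (hhom : ∀ t : ℝ, 0 < t → ∀ x : Fin 3 → ℝ, γ (t • x) = t * γ x)
    (hpos : ∀ w : Fin 3 → ℝ, w ≠ 0 → 0 < γ w)
    (hconv : ∀ w : Fin 3 → ℝ, w ≠ 0 → ∀ v : Fin 3 → ℝ, (¬ ∃ t : ℝ, v = t • w) →
      0 < fderiv ℝ (fderiv ℝ γ) w v v)
    (Ω : Set (Fin 2 → ℝ)) (hΩ : IsOpen Ω)
    (u : (Fin 2 → ℝ) → ℝ) (hu : ContDiffOn ℝ (⊤ : ℕ∞) u Ω)
    (heq : ∀ x ∈ Ω,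
      ∑ i : Fin 2, ∑ j : Fin 2,
        fderiv ℝ (fderiv ℝ γ)
            ![-(fderiv ℝ u x (Pi.single 0 1)), -(fderiv ℝ u x (Pi.single 1 1)), 1]
            (Pi.single i.castSucc 1) (Pi.single j.castSucc 1)
          * fderiv ℝ (fderiv ℝ u) x (Pi.single i 1) (Pi.single j 1) = 0) :
    ∀ x ∈ Ω,
      (Matrix.of fun i j : Fin 2 =>
        fderiv ℝ (fderiv ℝ u) x (Pi.single i 1) (Pi.single j 1)).det = 0 →
      (Matrix.of fun i j : Fin 2 =>
        fderiv ℝ (fderiv ℝ u) x (Pi.single i 1) (Pi.single j 1)) = 0 := by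
  intro x hx hdet
  set w : Fin 3 → ℝ :=
    ![-(fderiv ℝ u x (Pi.single 0 1)), -(fderiv ℝ u x (Pi.single 1 1)), 1] with hw
  have hwne : w ≠ 0 := by
    intro h
    have h2 : w 2 = 0 := by rw [h]; rfl
    simp [hw] at h2
  set D := fderiv ℝ (fderiv ℝ γ) w with hD
  set E : Fin 2 → (Fin 3 → ℝ) := fun i => Pi.single i.castSucc 1 with hE
  -- positive definiteness of the tangential block of D²γ(w)
  have quad : ∀ v : Fin 2 → ℝ, v ≠ 0 →
      0 < D (E 0) (E 0) * (v 0 * v 0) + D (E 0) (E 1) * (v 0 * v 1)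
        + D (E 1) (E 0) * (v 1 * v 0) + D (E 1) (E 1) * (v 1 * v 1) := by
    intro v hv
    set V : Fin 3 → ℝ := v 0 • E 0 + v 1 • E 1 with hV
    have hV2 : V 2 = 0 := by simp [hV, hE, Pi.single_apply, Fin.ext_iff]
    have hV0 : V 0 = v 0 := by simp [hV, hE, Pi.single_apply, Fin.ext_iff]
    have hV1 : V 1 = v 1 := by simp [hV, hE, Pi.single_apply, Fin.ext_iff]
    have hnp : ¬ ∃ t : ℝ, V = t • w := by
      rintro ⟨t, ht⟩
      have h2 : V 2 = t * w 2 := by rw [ht]; rfl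
      have hw2 : w 2 = 1 := by simp [hw]
      rw [hV2, hw2, mul_one] at h2
      apply hv
      ext i
      fin_cases i
      · have := congrFun ht 0
        simpa [← h2, hV0] using this
      · have := congrFun ht 1
        simpa [← h2, hV1] using this
    have hpos' := hconv w hwne V hnp
    rw [← hD] at hpos'
    have hexp : D V V = D (E 0) (E 0) * (v 0 * v 0) + D (E 0) (E 1) * (v 0 * v 1)
        + D (E 1) (E 0) * (v 1 * v 0) + D (E 1) (E 1) * (v 1 * v 1) := by
      simp [hV, map_add, map_smul, ContinuousLinearMap.add_apply,
        ContinuousLinearMap.smul_apply, smul_eq_mul]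
      ring
    rw [hexp] at hpos'
    exact hpos'
  -- symmetry of the Hessian
  have hsym : fderiv ℝ (fderiv ℝ u) x (Pi.single 0 1) (Pi.single 1 1)
      = fderiv ℝ (fderiv ℝ u) x (Pi.single 1 1) (Pi.single 0 1) := by
    have hca : ContDiffAt ℝ ((⊤ : ℕ∞) : WithTop ℕ∞) u x :=
      hu.contDiffAt (hΩ.mem_nhds hx)
    have h2 : (2 : WithTop ℕ∞) ≤ ((⊤ : ℕ∞) : WithTop ℕ∞) :=
      le_of_eq_of_le (by norm_cast) (WithTop.coe_le_coe.mpr le_top)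
    exact (hca.isSymmSndFDerivAt (by rw [minSmoothness_of_isRCLikeNormedField]; exact h2)) _ _
  set a := fderiv ℝ (fderiv ℝ u) x (Pi.single (0 : Fin 2) 1) (Pi.single (0 : Fin 2) 1) with ha
  set b := fderiv ℝ (fderiv ℝ u) x (Pi.single (0 : Fin 2) 1) (Pi.single (1 : Fin 2) 1) with hb
  set c := fderiv ℝ (fderiv ℝ u) x (Pi.single (1 : Fin 2) 1) (Pi.single (1 : Fin 2) 1) with hc
  have hdet' : a * c - b * b = 0 := by
    have := hdet
    rw [Matrix.det_fin_two] at this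
    simpa [Matrix.of_apply, ← ha, ← hb, ← hc, ← hsym] using this
  have htr : D (E 0) (E 0) * a + D (E 0) (E 1) * b + D (E 1) (E 0) * b
      + D (E 1) (E 1) * c = 0 := by
    have := heq x hx
    rw [Fin.sum_univ_two] at this
    simp only [Fin.sum_univ_two] at this
    simp only [← hw, ← hD, ← hE] at this
    have e0 : E 0 = Pi.single (Fin.castSucc 0) 1 := rfl
    have e1 : E 1 = Pi.single (Fin.castSucc 1) 1 := rfl
    rw [← e0, ← e1] at this
    rw [← ha, ← hb, ← hc, ← hsym] at this
    linarith [this]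
  have hA : a = 0 := by
    by_contra hA0
    have hq := quad ![a, b] (by
      intro h
      apply hA0
      have := congrFun h 0
      simpa using this)
    simp only [Matrix.cons_val_zero, Matrix.cons_val_one, Matrix.head_cons] at hq
    have hz : D (E 0) (E 0) * (a * a) + D (E 0) (E 1) * (a * b)
        + D (E 1) (E 0) * (b * a) + D (E 1) (E 1) * (b * b) = 0 := by
      linear_combination a * htr - D (E 1) (E 1) * hdet'
    linarith [hq, hz]
  have hC : c = 0 := by
    by_contra hC0
    have hq := quad ![b, c] (by
      intro h
      apply hC0
      have := congrFun h 1
      simpa using this)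
    simp only [Matrix.cons_val_zero, Matrix.cons_val_one, Matrix.head_cons] at hq
    have hz : D (E 0) (E 0) * (b * b) + D (E 0) (E 1) * (b * c)
        + D (E 1) (E 0) * (c * b) + D (E 1) (E 1) * (c * c) = 0 := by
      linear_combination c * htr - D (E 0) (E 0) * hdet'
    linarith [hq, hz]
  have hB : b = 0 := by
    rw [hA, hC] at hdet'
    have : b * b = 0 := by linarith
    exact mul_self_eq_zero.mp this
  have hMa : fderiv ℝ (fderiv ℝ u) x (Pi.single (0 : Fin 2) 1) (Pi.single (0 : Fin 2) 1) = 0 := by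
    rw [← ha]; exact hA
  have hMb : fderiv ℝ (fderiv ℝ u) x (Pi.single (0 : Fin 2) 1) (Pi.single (1 : Fin 2) 1) = 0 := by
    rw [← hb]; exact hB
  have hMc : fderiv ℝ (fderiv ℝ u) x (Pi.single (1 : Fin 2) 1) (Pi.single (0 : Fin 2) 1) = 0 := by
    rw [← hsym]; exact hB
  have hMd : fderiv ℝ (fderiv ℝ u) x (Pi.single (1 : Fin 2) 1) (Pi.single (1 : Fin 2) 1) = 0 := by
    rw [← hc]; exact hC
  ext i j
  simp only [Matrix.of_apply, Matrix.zero_apply]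
  fin_cases i <;> fin_cases j
  · exact hMa
  · exact hMb
  · exact hMc
  · exact hMd
end
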